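/- If each X_i is a finite set with at least two points, then d⁰(V) = d⁰(V*): a set Y ⊆ ∏X_i is in the ideal generated by V-avoidance iff it is in the ideal generated by V*-avoidance. -/

import Mathlib

open Set Cardinal

/-- The set of branches of the trimmed tree `T[A,α]`:
all `β` agreeing with `α` outside of `A`. -/
def branches (X : ℕ → Type) (A : Set ℕ) (α : ∀ i, X i) : Set (∀ i, X i) :=
  {β | ∀ n ∉ A, β n = α n}

/-- The family `V` of branch sets of trimmed trees. -/
def treeV (X : ℕ → Type) : Set (Set (∀ i, X i)) :=
  {S | ∃ A α, A.Infinite ∧ S = branches X A α}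

/-- `[T]*`: all `β` agreeing with `α` outside of `A`, up to finitely many exceptions. -/
def starBranches (X : ℕ → Type) (A : Set ℕ) (α : ∀ i, X i) : Set (∀ i, X i) :=
  {β | {n | n ∉ A ∧ β n ≠ α n}.Finite}

/-- The family `V*`. -/
def treeVstar (X : ℕ → Type) : Set (Set (∀ i, X i)) :=
  {S | ∃ A α, A.Infinite ∧ S = starBranches X A α}

/-- The ideal `d⁰(F)`. -/
def d0 {X : ℕ → Type} (F : Set (Set (∀ i, X i))) : Set (Set (∀ i, X i)) :=
  {Y | ∀ W ∈ F, ∃ U ∈ F, U ⊆ W ∧ U ∩ Y = ∅}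

/-- `α_s`: overwrite `α` by `s` on `{0,…,n-1}`. -/
def modifySeq (X : ℕ → Type) (n : ℕ) (s α : ∀ i, X i) : ∀ i, X i :=
  fun i => if i < n then s i else α i

/-- `add(d⁰(V))`: the least cardinality of a subfamily of `d⁰(V)` whose union
is not in `d⁰(V)`. -/
noncomputable def addd0 (X : ℕ → Type) : Cardinal :=
  sInf {c | ∃ G : Set (Set (∀ i, X i)), G ⊆ d0 (treeV X) ∧ ⋃₀ G ∉ d0 (treeV X) ∧ c = #G}

section Aux

variable {X : ℕ → Type}

lemma branches_mono {A B : Set ℕ} {α β : ∀ i, X i} (hAB : A ⊆ B)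
    (h : ∀ n ∉ B, α n = β n) : branches X A α ⊆ branches X B β := by
  intro x hx n hn
  rw [hx n (fun hA => hn (hAB hA)), h n hn]

lemma branches_subset_extract [∀ i, Nontrivial (X i)] {A B : Set ℕ} {α β : ∀ i, X i}
    (h : branches X A α ⊆ branches X B β) :
    A ⊆ B ∧ ∀ n ∉ B, α n = β n := by
  have hα : α ∈ branches X A α := fun n _ => rfl
  refine ⟨?_, fun n hn => h hα n hn⟩
  intro n hnA
  by_contra hnB
  obtain ⟨v, hv⟩ := exists_ne (β n)
  have hmem : Function.update α n v ∈ branches X A α := by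
    intro m hm
    exact Function.update_of_ne (fun he => hm (by rw [he]; exact hnA)) _ _
  have := h hmem n hnB
  rw [Function.update_self] at this
  exact hv this

lemma singleStep [∀ i, Nontrivial (X i)] {Y : Set (∀ i, X i)} (hY : Y ∈ d0 (treeV X))
    {B : Set ℕ} (hB : B.Infinite) (γ : ∀ i, X i) (N : ℕ) (s : ∀ i, X i) :
    ∃ B' γ', B' ⊆ B \ Set.Iio N ∧ B'.Infinite ∧
      (∀ n, (n < N ∨ n ∉ B) → γ' n = γ n) ∧
      branches X B' (modifySeq X N s γ') ∩ Y = ∅ := by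
  classical
  have hBN : (B \ Set.Iio N).Infinite := hB.diff (Set.finite_Iio N)
  obtain ⟨U, hU, hUW, hUY⟩ := hY (branches X (B \ Set.Iio N) (modifySeq X N s γ))
    ⟨_, _, hBN, rfl⟩
  obtain ⟨B₁, γ₁, hB₁, rfl⟩ := hU
  obtain ⟨hsub, hval⟩ := branches_subset_extract hUW
  set γ' : ∀ i, X i := fun n => if n ∈ B ∧ N ≤ n then γ₁ n else γ n with hγ'def
  refine ⟨B₁, γ', hsub, hB₁, ?_, ?_⟩
  · intro n hn
    have hc : ¬ (n ∈ B ∧ N ≤ n) := by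
      rcases hn with h | h
      · exact fun hc => absurd h (not_lt.2 hc.2)
      · exact fun hc => h hc.1
    simp only [hγ'def, if_neg hc]
  · have hss : branches X B₁ (modifySeq X N s γ') ⊆ branches X B₁ γ₁ := by
      apply branches_mono (subset_refl B₁)
      intro n hn
      by_cases hN : n < N
      · have h1 : γ₁ n = modifySeq X N s γ n :=
          hval n (fun hmem => hmem.2 hN)
        simp only [modifySeq, if_pos hN] at h1 ⊢
        exact h1.symm
      · by_cases hnB : n ∈ B
        · simp only [modifySeq, if_neg hN]
          rw [hγ'def]
          exact if_pos (show n ∈ B ∧ N ≤ n from ⟨hnB, not_lt.1 hN⟩)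
        · have h1 : γ₁ n = modifySeq X N s γ n :=
            hval n (fun hmem => hnB hmem.1)
          simp only [modifySeq, if_neg hN] at h1 ⊢
          simp only [hγ'def]
          rw [if_neg (fun hc => hnB hc.1)]
          exact h1.symm
    exact Set.eq_empty_of_subset_empty
      ((Set.inter_subset_inter_left Y hss).trans (le_of_eq hUY))

lemma listStep [∀ i, Nontrivial (X i)] {Y : Set (∀ i, X i)} (hY : Y ∈ d0 (treeV X))
    (N : ℕ) (l : List (∀ i, X i)) :
    ∀ (B : Set ℕ), B.Infinite → ∀ γ : ∀ i, X i,
    ∃ B' γ', B' ⊆ B ∧ B'.Infinite ∧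
      (∀ n, (n < N ∨ n ∉ B) → γ' n = γ n) ∧
      ∀ s ∈ l, branches X B' (modifySeq X N s γ') ∩ Y = ∅ := by
  induction l with
  | nil => exact fun B hB γ => ⟨B, γ, subset_rfl, hB, fun _ _ => rfl, by simp⟩
  | cons s l ih =>
    intro B hB γ
    obtain ⟨B₁, γ₁, hsub, hB₁, hγ₁, hdisj⟩ := singleStep hY hB γ N s
    have hsubB : B₁ ⊆ B := hsub.trans Set.diff_subset
    obtain ⟨B', γ', hsub', hB', hγ', hl⟩ := ih B₁ hB₁ γ₁
    refine ⟨B', γ', hsub'.trans hsubB, hB', ?_, ?_⟩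
    · intro n hn
      have hn1 : n < N ∨ n ∉ B₁ := hn.imp id (fun h hc => h (hsubB hc))
      rw [hγ' n hn1, hγ₁ n hn]
    · intro t ht
      rcases List.mem_cons.1 ht with rfl | ht
      · have hss : branches X B' (modifySeq X N t γ') ⊆
            branches X B₁ (modifySeq X N t γ₁) := by
          apply branches_mono hsub'
          intro n hn
          by_cases hN : n < N
          · simp only [modifySeq, if_pos hN]
          · simp only [modifySeq, if_neg hN]
            exact hγ' n (Or.inr hn)
        exact Set.eq_empty_of_subset_empty
          ((Set.inter_subset_inter_left Y hss).trans (le_of_eq hdisj))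
      · exact hl t ht

lemma stageStep [∀ i, Finite (X i)] [∀ i, Nontrivial (X i)] {Y : Set (∀ i, X i)}
    (hY : Y ∈ d0 (treeV X)) {B : Set ℕ} (hB : B.Infinite) (γ : ∀ i, X i) (N : ℕ) :
    ∃ B' γ', B' ⊆ B ∧ B' ∩ Set.Iio N = ∅ ∧ B'.Infinite ∧
      (∀ n, (n < N ∨ n ∉ B) → γ' n = γ n) ∧
      ∀ t : ∀ i, X i, branches X B' (modifySeq X N t γ') ∩ Y = ∅ := by
  have hne : ∀ i, Nonempty (X i) := fun i => ⟨Classical.arbitrary (X i)⟩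
  obtain ⟨L, hL⟩ : ∃ L : List (∀ i : Fin N, X (i : ℕ)), ∀ f, f ∈ L := by
    haveI : Fintype (∀ i : Fin N, X (i : ℕ)) := Fintype.ofFinite _
    exact ⟨Finset.univ.toList, fun f => Finset.mem_toList.2 (Finset.mem_univ f)⟩
  set d : ∀ i, X i := fun i => Classical.arbitrary (X i) with hd
  set ext : (∀ i : Fin N, X (i : ℕ)) → (∀ i, X i) :=
    fun f i => if h : i < N then f ⟨i, h⟩ else d i with hext
  have hBN : (B \ Set.Iio N).Infinite := hB.diff (Set.finite_Iio N)
  obtain ⟨B', γ', hsub, hB', hγ', hl⟩ := listStep hY N (L.map ext) (B \ Set.Iio N) hBN γ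
  refine ⟨B', γ', hsub.trans Set.diff_subset, ?_, hB', ?_, ?_⟩
  · apply Set.eq_empty_of_subset_empty
    rintro n ⟨hn1, hn2⟩
    exact (hsub hn1).2 hn2
  · intro n hn
    apply hγ' n
    rcases hn with h | h
    · exact Or.inl h
    · exact Or.inr (fun hc => h hc.1)
  · intro t
    have hmem : ext (fun i => t (i : ℕ)) ∈ L.map ext :=
      List.mem_map_of_mem (hL (fun i => t (i : ℕ)))
    have h1 := hl _ hmem
    have heq : modifySeq X N (ext fun i => t (i : ℕ)) γ' = modifySeq X N t γ' := by
      funext n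
      simp only [modifySeq]
      by_cases hN : n < N
      · simp only [if_pos hN, hext, dif_pos hN]
      · simp only [if_neg hN]
    rwa [heq] at h1

lemma starBranches_subset_extract [∀ i, Nontrivial (X i)] {A B : Set ℕ} {α γ : ∀ i, X i}
    (h : starBranches X B γ ⊆ starBranches X A α) :
    (B \ A).Finite ∧ {n | n ∉ A ∧ γ n ≠ α n}.Finite := by
  classical
  have hγmem : γ ∈ starBranches X B γ := by
    have : {n | n ∉ B ∧ γ n ≠ γ n} = ∅ := by ext n; simp
    simp only [starBranches, Set.mem_setOf_eq, this]
    exact Set.finite_empty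
  refine ⟨?_, h hγmem⟩
  by_contra hinf
  have hc : ∀ n, ∃ v : X n, v ≠ α n := fun n => exists_ne (α n)
  choose c hcne using hc
  set β : ∀ i, X i := fun n => if n ∈ B \ A then c n else γ n with hβ
  have hβmem : β ∈ starBranches X B γ := by
    have : {n | n ∉ B ∧ β n ≠ γ n} = ∅ := by
      ext n
      simp only [Set.mem_setOf_eq, Set.mem_empty_iff_false, iff_false, not_and,
        not_not]
      intro hn
      show (if n ∈ B \ A then c n else γ n) = γ n
      exact if_neg (fun hc' => hn hc'.1)
    simp only [starBranches, Set.mem_setOf_eq, this]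
    exact Set.finite_empty
  have hfin := h hβmem
  have hss : B \ A ⊆ {n | n ∉ A ∧ β n ≠ α n} := by
    intro n hn
    refine ⟨hn.2, ?_⟩
    show (if n ∈ B \ A then c n else γ n) ≠ α n
    rw [if_pos hn]
    exact hcne n
  exact hinf (hfin.subset hss)

end Aux

theorem stmt14 (X : ℕ → Type) [∀ i, Finite (X i)] [∀ i, Nontrivial (X i)] :
    d0 (treeV X) = d0 (treeVstar X) := by
  classical
  ext Y
  simp only [d0, Set.mem_setOf_eq]
  constructor
  · -- hard direction: fusion argument
    intro hY W hW
    obtain ⟨A, α, hA, rfl⟩ := hW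
    have hYd : Y ∈ d0 (treeV X) := hY
    -- total step function
    have step : ∀ p : Set ℕ × ((∀ i, X i) × ℕ),
        ∃ q : Set ℕ × ((∀ i, X i) × ℕ),
          p.1.Infinite →
          (q.1 ⊆ p.1 ∧ q.1 ∩ Set.Iio p.2.2 = ∅ ∧ q.1.Infinite ∧
           (∀ n, (n < p.2.2 ∨ n ∉ p.1) → q.2.1 n = p.2.1 n) ∧
           (∀ t, branches X q.1 (modifySeq X p.2.2 t q.2.1) ∩ Y = ∅) ∧
           q.2.2 = sInf q.1 + p.2.2 + 1) := by
      intro p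
      by_cases hp : p.1.Infinite
      · obtain ⟨B', γ', h1, h2, h3, h4, h5⟩ := stageStep hYd hp p.2.1 p.2.2
        exact ⟨(B', γ', sInf B' + p.2.2 + 1), fun _ => ⟨h1, h2, h3, h4, h5, rfl⟩⟩
      · exact ⟨p, fun h => absurd h hp⟩
    choose f hf using step
    set σ : ℕ → Set ℕ × ((∀ i, X i) × ℕ) :=
      fun k => Nat.rec (A, α, 0) (fun _ p => f p) k with hσ
    have hσs : ∀ k, σ (k + 1) = f (σ k) := fun k => rfl
    have inf : ∀ k, (σ k).1.Infinite := by
      intro k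
      induction k with
      | zero => exact hA
      | succ k ih =>
        rw [hσs]
        exact (hf (σ k) ih).2.2.1
    have hstep : ∀ k, (σ (k+1)).1 ⊆ (σ k).1 ∧
        (σ (k+1)).1 ∩ Set.Iio (σ k).2.2 = ∅ ∧ (σ (k+1)).1.Infinite ∧
        (∀ n, (n < (σ k).2.2 ∨ n ∉ (σ k).1) → (σ (k+1)).2.1 n = (σ k).2.1 n) ∧
        (∀ t, branches X (σ (k+1)).1 (modifySeq X (σ k).2.2 t (σ (k+1)).2.1) ∩ Y = ∅) ∧
        (σ (k+1)).2.2 = sInf (σ (k+1)).1 + (σ k).2.2 + 1 := by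
      intro k
      rw [hσs]
      exact hf (σ k) (inf k)
    -- monotonicity of B
    have Bmono : ∀ k j, k ≤ j → (σ j).1 ⊆ (σ k).1 := by
      intro k j hkj
      induction j, hkj using Nat.le_induction with
      | base => exact subset_rfl
      | succ j hkj ih => exact ((hstep j).1).trans ih
    -- N grows
    have Nge : ∀ k, k ≤ (σ k).2.2 := by
      intro k
      induction k with
      | zero => exact Nat.zero_le _
      | succ k ih =>
        rw [(hstep k).2.2.2.2.2]
        omega
    have Nmono : ∀ k j, k ≤ j → (σ k).2.2 ≤ (σ j).2.2 := by
      intro k j hkj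
      induction j, hkj using Nat.le_induction with
      | base => exact le_rfl
      | succ j hkj ih =>
        rw [(hstep j).2.2.2.2.2]
        omega
    -- the diagonal points
    set b : ℕ → ℕ := fun k => sInf (σ (k+1)).1 with hb
    have hbmem : ∀ k, b k ∈ (σ (k+1)).1 := fun k => Nat.sInf_mem (inf (k+1)).nonempty
    have hbge : ∀ k, (σ k).2.2 ≤ b k := by
      intro k
      by_contra hlt
      push_neg at hlt
      have : b k ∈ (σ (k+1)).1 ∩ Set.Iio (σ k).2.2 := ⟨hbmem k, hlt⟩
      rw [(hstep k).2.1] at this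
      exact this
    have hblt : ∀ k, b k < (σ (k+1)).2.2 := by
      intro k
      rw [(hstep k).2.2.2.2.2]
      have hbk : b k = sInf (σ (k+1)).1 := rfl
      omega
    have hbsm : StrictMono b :=
      strictMono_nat_of_lt_succ (fun k => lt_of_lt_of_le (hblt k) (hbge (k+1)))
    -- value freezing
    have hfreeze : ∀ k n, (n < (σ k).2.2 ∨ n ∉ (σ k).1) →
        ∀ j, k ≤ j → (σ j).2.1 n = (σ k).2.1 n := by
      intro k n hn j hkj
      induction j, hkj using Nat.le_induction with
      | base => rfl
      | succ j hkj ih =>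
        have hn' : n < (σ j).2.2 ∨ n ∉ (σ j).1 :=
          hn.imp (fun h => lt_of_lt_of_le h (Nmono k j hkj))
            (fun h hc => h (Bmono k j hkj hc))
        rw [(hstep j).2.2.2.1 n hn', ih]
    set γfin : ∀ i, X i := fun n => (σ (n+1)).2.1 n with hγfin
    have hγstab : ∀ n j, n + 1 ≤ j → (σ j).2.1 n = γfin n := by
      intro n j hj
      have hlt : n < (σ (n+1)).2.2 := lt_of_lt_of_le (Nat.lt_succ_self n) (Nge (n+1))
      exact hfreeze (n+1) n (Or.inl hlt) j hj
    have hγeq : ∀ k n, (n < (σ k).2.2 ∨ n ∉ (σ k).1) → γfin n = (σ k).2.1 n := by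
      intro k n hn
      rcases le_total k (n+1) with h | h
      · exact (hfreeze k n hn (n+1) h)
      · exact (hγstab n k h).symm
    set Bfin : Set ℕ := Set.range b with hBfin
    have hBfinInf : Bfin.Infinite := Set.infinite_range_of_injective hbsm.injective
    have hBfinA : Bfin ⊆ A := by
      rintro n ⟨k, rfl⟩
      exact Bmono 0 (k+1) (Nat.zero_le _) (hbmem k)
    have hγfinA : ∀ n ∉ A, γfin n = α n := by
      intro n hn
      exact hγeq 0 n (Or.inr hn)
    refine ⟨starBranches X Bfin γfin, ⟨Bfin, γfin, hBfinInf, rfl⟩, ?_, ?_⟩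
    · -- starBranches Bfin γfin ⊆ starBranches A α
      intro β hβ
      apply hβ.subset
      rintro n ⟨hn1, hn2⟩
      refine ⟨fun hc => hn1 (hBfinA hc), fun hc => hn2 ?_⟩
      rw [hc, hγfinA n hn1]
    · -- disjoint from Y
      apply Set.eq_empty_iff_forall_notMem.2
      rintro β ⟨hβs, hβY⟩
      obtain ⟨m, hm⟩ := hβs.bddAbove
      set k : ℕ := m + 1 with hk
      have hβmem : β ∈ branches X (σ (k+1)).1 (modifySeq X (σ k).2.2 β (σ (k+1)).2.1) := by
        intro n hn
        simp only [modifySeq]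
        by_cases hN : n < (σ k).2.2
        · rw [if_pos hN]
        · rw [if_neg hN]
          push_neg at hN
          have hnB : n ∉ Bfin := by
            rintro ⟨j, rfl⟩
            rcases lt_or_ge j k with hj | hj
            · have : b j < (σ k).2.2 :=
                lt_of_lt_of_le (hblt j) (Nmono (j+1) k hj)
              omega
            · exact hn (Bmono (k+1) (j+1) (Nat.succ_le_succ hj) (hbmem j))
          have hnE : n ∉ {n | n ∉ Bfin ∧ β n ≠ γfin n} := by
            intro hc
            have := hm hc
            have := Nge k
            omega
          have hβγ : β n = γfin n := by
            by_contra hne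
            exact hnE ⟨hnB, hne⟩
          rw [hβγ]
          exact hγeq (k+1) n (Or.inr hn)
      have := (hstep k).2.2.2.2.1 β
      rw [Set.eq_empty_iff_forall_notMem] at this
      exact this β ⟨hβmem, hβY⟩
  · -- easy direction
    intro hY W hW
    obtain ⟨A, α, hA, rfl⟩ := hW
    obtain ⟨U, hU, hUW, hUY⟩ := hY (starBranches X A α) ⟨A, α, hA, rfl⟩
    obtain ⟨B, γ, hB, rfl⟩ := hU
    obtain ⟨hBA, hEγ⟩ := starBranches_subset_extract hUW
    have hBAinf : (B ∩ A).Infinite := by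
      have he : B ∩ A = B \ (B \ A) := by
        ext n
        simp only [Set.mem_inter_iff, Set.mem_diff]
        tauto
      rw [he]
      exact hB.diff hBA
    set δ : ∀ i, X i := fun n => if n ∈ A then γ n else α n with hδ
    have hsubW : branches X (B ∩ A) δ ⊆ branches X A α := by
      apply branches_mono Set.inter_subset_right
      intro n hn
      simp only [hδ, if_neg hn]
    have hsubStar : branches X (B ∩ A) δ ⊆ starBranches X B γ := by
      intro β hβ
      apply hEγ.subset
      rintro n ⟨hn1, hn2⟩
      have hnBA : n ∉ B ∩ A := fun hc => hn1 hc.1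
      have hβn : β n = δ n := hβ n hnBA
      by_cases hnA : n ∈ A
      · exfalso
        apply hn2
        rw [hβn]
        show (if n ∈ A then γ n else α n) = γ n
        exact if_pos hnA
      · refine ⟨hnA, ?_⟩
        intro hc
        apply hn2
        rw [hβn]
        show (if n ∈ A then γ n else α n) = γ n
        rw [if_neg hnA]
        exact hc.symm
    refine ⟨branches X (B ∩ A) δ, ⟨B ∩ A, δ, hBAinf, rfl⟩, hsubW, ?_⟩
    exact Set.eq_empty_of_subset_empty
      ((Set.inter_subset_inter_left Y hsubStar).trans (le_of_eq hUY))
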